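/- arXiv:2605.05986 — 3 statements merged into one kernel-verified Lean document; each statement's English description precedes it below -/
import Mathlib

section
/- Let p > 0, β ∈ (0, 1/2], d ≥ 1 with p < d(1-β), t > 0, and define L_t(u) = Σ_{ℓ≥0} 2^{-pℓ} min( u^{1/(2β)}, (u/t)^{1/2} 2^{dℓ(1-β)} ). Then there is a constant C = C(p,β,d) > 0 such that for all u ∈ (0,1] and t ≥ 1: L_t(u) ≤ C · u^{1/(2β)} · min( 1, (u t^{β/(1-β)})^{-p/(2βd)} ). -/
open Real Finset

lemma two_rpow_nat_mul (a : ℝ) (n : ℕ) : (2:ℝ) ^ (a * n) = ((2:ℝ) ^ a) ^ n := by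
  rw [← Real.rpow_natCast ((2:ℝ) ^ a) n, ← Real.rpow_mul (by norm_num : (0:ℝ) ≤ 2)]

lemma geom_summable {p : ℝ} (hp : 0 < p) :
    Summable (fun ℓ : ℕ => (2:ℝ) ^ (-p * ℓ)) := by
  have h1 : ∀ ℓ : ℕ, (2:ℝ) ^ (-p * ℓ) = ((2:ℝ) ^ (-p)) ^ ℓ := fun ℓ => two_rpow_nat_mul _ _
  simp_rw [h1]
  exact summable_geometric_of_lt_one (by positivity)
    (Real.rpow_lt_one_of_one_lt_of_neg one_lt_two (by linarith))

lemma key {p m Y : ℝ} (hp : 0 < p) (hpm : p < m) (hY : 0 < Y) :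
    ∑' ℓ : ℕ, (2:ℝ) ^ (-p * ℓ) * min 1 (Y * 2 ^ (m * ℓ)) ≤
      ((2:ℝ)^m / ((2:ℝ)^(m-p) - 1) + (1 - (2:ℝ)^(-p))⁻¹) * min 1 (Y ^ (p/m)) := by
  have hm : 0 < m := hp.trans hpm
  set r : ℝ := (2:ℝ) ^ (-p) with hr_def
  have hr0 : 0 < r := Real.rpow_pos_of_pos two_pos _
  have hr1 : r < 1 := Real.rpow_lt_one_of_one_lt_of_neg one_lt_two (by linarith)
  set x : ℝ := (2:ℝ) ^ (m - p) with hx_def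
  have hx1 : 1 < x := by
    rw [hx_def, show (1:ℝ) = (2:ℝ)^(0:ℝ) by simp]
    exact Real.rpow_lt_rpow_of_exponent_lt one_lt_two (by linarith)
  set f : ℕ → ℝ := fun ℓ => (2:ℝ) ^ (-p * ℓ) * min 1 (Y * 2 ^ (m * ℓ)) with hf_def
  have hf_nonneg : ∀ ℓ, 0 ≤ f ℓ := by
    intro ℓ
    apply mul_nonneg (Real.rpow_pos_of_pos two_pos _).le
    exact le_min zero_le_one (by positivity)
  have hf_le : ∀ ℓ, f ℓ ≤ (2:ℝ) ^ (-p * ℓ) := by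
    intro ℓ
    calc f ℓ ≤ (2:ℝ) ^ (-p * ℓ) * 1 :=
          mul_le_mul_of_nonneg_left (min_le_left _ _) (Real.rpow_pos_of_pos two_pos _).le
      _ = _ := mul_one _
  have hsum : Summable f := Summable.of_nonneg_of_le hf_nonneg hf_le (geom_summable hp)
  have hgeom : ∑' ℓ : ℕ, (2:ℝ) ^ (-p * (ℓ:ℝ)) = (1 - r)⁻¹ := by
    simp_rw [fun ℓ : ℕ => two_rpow_nat_mul (-p) ℓ]
    exact tsum_geometric_of_lt_one hr0.le hr1
  have hconst1 : 0 ≤ (2:ℝ)^m / ((2:ℝ)^(m-p) - 1) := by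
    apply div_nonneg (Real.rpow_pos_of_pos two_pos _).le
    linarith
  have hconst2 : 0 ≤ (1 - r)⁻¹ := by
    rw [inv_nonneg]; linarith
  by_cases hY1 : 1 ≤ Y
  · have hmin : ∀ ℓ : ℕ, min 1 (Y * 2 ^ (m * (ℓ:ℝ))) = 1 := by
      intro ℓ
      apply min_eq_left
      have h2 : (1:ℝ) ≤ 2 ^ (m * (ℓ:ℝ)) := Real.one_le_rpow one_le_two (by positivity)
      nlinarith
    have heq : ∑' ℓ : ℕ, f ℓ = (1 - r)⁻¹ := by
      rw [← hgeom]; congr 1; funext ℓ; rw [hf_def]; simp [hmin ℓ]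
    rw [heq]
    have hY2 : (1:ℝ) ≤ Y ^ (p/m) := Real.one_le_rpow hY1 (by positivity)
    rw [min_eq_left hY2, mul_one]
    linarith
  · push_neg at hY1
    have hYinv : 1 < Y⁻¹ := (one_lt_inv₀ hY).mpr hY1
    set L : ℝ := Real.logb 2 Y⁻¹ with hL_def
    have hL : 0 < L := Real.logb_pos one_lt_two hYinv
    have h2L : (2:ℝ) ^ L = Y⁻¹ := Real.rpow_logb two_pos (by norm_num) (inv_pos.mpr hY)
    set N : ℕ := ⌈L / m⌉₊ with hN_def
    have hN1 : L / m ≤ N := Nat.le_ceil _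
    have hN2 : (N:ℝ) < L / m + 1 := Nat.ceil_lt_add_one (by positivity)
    -- (b) : 2^(-p*N) ≤ Y^(p/m)
    have hb : (2:ℝ) ^ (-p * (N:ℝ)) ≤ Y ^ (p/m) := by
      have h1 : (2:ℝ) ^ (-p * (N:ℝ)) ≤ (2:ℝ) ^ (L * (-(p/m))) := by
        apply Real.rpow_le_rpow_of_exponent_le one_le_two
        have h := mul_le_mul_of_nonneg_left hN1 hp.le
        have : L * (-(p/m)) = -(p * (L/m)) := by ring
        rw [this]; linarith
      have h2 : (2:ℝ) ^ (L * (-(p/m))) = Y ^ (p/m) := by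
        rw [Real.rpow_mul (by norm_num), h2L, Real.inv_rpow hY.le,
          Real.rpow_neg hY.le, inv_inv]
      linarith
    -- (a) : Y * 2^(m*N) ≤ 2^m
    have ha : Y * (2:ℝ) ^ (m * (N:ℝ)) ≤ (2:ℝ) ^ m := by
      have h0 : m * (N:ℝ) ≤ L + m := by
        have h := mul_le_mul_of_nonneg_left hN2.le hm.le
        rw [mul_add, mul_one, mul_div_cancel₀ _ (ne_of_gt hm)] at h
        exact h
      have h1 : (2:ℝ) ^ (m * (N:ℝ)) ≤ (2:ℝ) ^ (L + m) :=
        Real.rpow_le_rpow_of_exponent_le one_le_two h0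
      have h2 : (2:ℝ) ^ (L + m) = Y⁻¹ * (2:ℝ) ^ m := by
        rw [Real.rpow_add two_pos, h2L]
      calc Y * (2:ℝ) ^ (m * (N:ℝ)) ≤ Y * (Y⁻¹ * (2:ℝ)^m) := by
            rw [← h2]; exact mul_le_mul_of_nonneg_left h1 hY.le
        _ = (2:ℝ) ^ m := by field_simp
    -- Y * x^N ≤ 2^m * Y^(p/m)
    have hxN : Y * x ^ N ≤ (2:ℝ)^m * Y ^ (p/m) := by
      have hxN' : x ^ N = (2:ℝ) ^ (m * (N:ℝ)) * (2:ℝ) ^ (-p * (N:ℝ)) := by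
        rw [hx_def, ← two_rpow_nat_mul, ← Real.rpow_add two_pos]
        ring_nf
      rw [hxN']
      calc Y * ((2:ℝ) ^ (m * (N:ℝ)) * (2:ℝ) ^ (-p * (N:ℝ)))
          = (Y * (2:ℝ) ^ (m * (N:ℝ))) * (2:ℝ) ^ (-p * (N:ℝ)) := by ring
        _ ≤ (2:ℝ)^m * Y ^ (p/m) := by
            apply mul_le_mul ha hb (Real.rpow_pos_of_pos two_pos _).le
              (Real.rpow_pos_of_pos two_pos _).le
    -- split the sum
    have hsplit := Summable.sum_add_tsum_nat_add (f := f) N hsum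
    have hS1 : ∑ i ∈ Finset.range N, f i ≤ (2:ℝ)^m / (x - 1) * Y ^ (p/m) := by
      have hterm : ∀ i ∈ Finset.range N, f i ≤ Y * x ^ i := by
        intro i _
        calc f i ≤ (2:ℝ) ^ (-p * (i:ℝ)) * (Y * 2 ^ (m * (i:ℝ))) :=
              mul_le_mul_of_nonneg_left (min_le_right _ _) (Real.rpow_pos_of_pos two_pos _).le
          _ = Y * ((2:ℝ) ^ (m * (i:ℝ)) * (2:ℝ) ^ (-p * (i:ℝ))) := by ring
          _ = Y * x ^ i := by
              rw [← Real.rpow_add two_pos, hx_def, ← two_rpow_nat_mul]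
              ring_nf
      calc ∑ i ∈ Finset.range N, f i ≤ ∑ i ∈ Finset.range N, Y * x ^ i :=
            Finset.sum_le_sum hterm
        _ = Y * ((x ^ N - 1)/(x - 1)) := by
            rw [← Finset.mul_sum, geom_sum_eq (ne_of_gt hx1)]
        _ ≤ Y * (x ^ N / (x - 1)) := by
            apply mul_le_mul_of_nonneg_left _ hY.le
            apply div_le_div_of_nonneg_right _ (by linarith)
            · linarith
        _ = (Y * x ^ N) / (x - 1) := by ring
        _ ≤ ((2:ℝ)^m * Y ^ (p/m)) / (x - 1) := by
            apply div_le_div_of_nonneg_right hxN (by linarith)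
        _ = (2:ℝ)^m / (x - 1) * Y ^ (p/m) := by ring
    have hS2 : ∑' i : ℕ, f (i + N) ≤ (1 - r)⁻¹ * Y ^ (p/m) := by
      have hsum2 : Summable (fun i : ℕ => f (i + N)) := (summable_nat_add_iff N).mpr hsum
      have hsumr : Summable (fun i : ℕ => (2:ℝ) ^ (-p * (N:ℝ)) * r ^ i) :=
        (summable_geometric_of_lt_one hr0.le hr1).mul_left _
      have hterm : ∀ i : ℕ, f (i + N) ≤ (2:ℝ) ^ (-p * (N:ℝ)) * r ^ i := by
        intro i
        calc f (i + N) ≤ (2:ℝ) ^ (-p * ((i + N : ℕ):ℝ)) := hf_le _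
          _ = (2:ℝ) ^ (-p * (N:ℝ)) * r ^ i := by
              rw [hr_def, ← two_rpow_nat_mul, ← Real.rpow_add two_pos]
              push_cast
              ring_nf
      calc ∑' i : ℕ, f (i + N) ≤ ∑' i : ℕ, (2:ℝ) ^ (-p * (N:ℝ)) * r ^ i :=
            Summable.tsum_le_tsum hterm hsum2 hsumr
        _ = (2:ℝ) ^ (-p * (N:ℝ)) * (1 - r)⁻¹ := by
            rw [tsum_mul_left, tsum_geometric_of_lt_one hr0.le hr1]
        _ ≤ Y ^ (p/m) * (1 - r)⁻¹ := mul_le_mul_of_nonneg_right hb hconst2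
        _ = (1 - r)⁻¹ * Y ^ (p/m) := by ring
    have hYp1 : Y ^ (p/m) ≤ 1 := Real.rpow_le_one hY.le hY1.le (by positivity)
    rw [min_eq_right hYp1]
    calc ∑' ℓ : ℕ, f ℓ = ∑ i ∈ Finset.range N, f i + ∑' i : ℕ, f (i + N) := hsplit.symm
      _ ≤ (2:ℝ)^m / (x - 1) * Y ^ (p/m) + (1 - r)⁻¹ * Y ^ (p/m) := add_le_add hS1 hS2
      _ = ((2:ℝ)^m / ((2:ℝ)^(m-p) - 1) + (1 - (2:ℝ)^(-p))⁻¹) * Y ^ (p/m) := by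
          rw [hx_def, hr_def]; ring

/-- `L_t(u) = Σ_{ℓ≥0} 2^{-pℓ} min( u^{1/(2β)}, (u/t)^{1/2} 2^{dℓ(1-β)} )`. -/
noncomputable def Lfun (d : ℕ) (p β t u : ℝ) : ℝ :=
  ∑' ℓ : ℕ, (2 : ℝ) ^ (-p * ℓ) *
    min (u ^ (1 / (2 * β))) ((u / t) ^ ((1 : ℝ) / 2) * 2 ^ ((d : ℝ) * ℓ * (1 - β)))

theorem stmt3 (d : ℕ) (hd : 1 ≤ d) (p β : ℝ) (hp : 0 < p)
    (hβ : β ∈ Set.Ioc (0 : ℝ) (1 / 2)) (h : p < (d : ℝ) * (1 - β)) :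
    ∃ C > (0 : ℝ), ∀ u ∈ Set.Ioc (0 : ℝ) 1, ∀ t ≥ (1 : ℝ),
      Lfun d p β t u ≤ C * u ^ (1 / (2 * β)) *
        min 1 ((u * t ^ (β / (1 - β))) ^ (-p / (2 * β * d))) := by
  obtain ⟨hβ0, hβ2⟩ := hβ
  have hβ1 : β < 1 := lt_of_le_of_lt hβ2 (by norm_num)
  have h1β : 0 < 1 - β := by linarith
  have hd0 : (0:ℝ) < (d:ℝ) := by exact_mod_cast Nat.lt_of_lt_of_le Nat.zero_lt_one hd
  set m : ℝ := (d:ℝ) * (1 - β) with hm_def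
  have hm : 0 < m := mul_pos hd0 h1β
  refine ⟨(2:ℝ)^m / ((2:ℝ)^(m-p) - 1) + (1 - (2:ℝ)^(-p))⁻¹, ?_, ?_⟩
  · have h1 : (1:ℝ) < (2:ℝ)^(m-p) := by
      rw [show (1:ℝ) = (2:ℝ)^(0:ℝ) by simp]
      exact Real.rpow_lt_rpow_of_exponent_lt one_lt_two (by linarith)
    have h2 : (2:ℝ)^(-p) < 1 := Real.rpow_lt_one_of_one_lt_of_neg one_lt_two (by linarith)
    have h3 : (0:ℝ) < (2:ℝ)^(-p) := Real.rpow_pos_of_pos two_pos _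
    have h4 : (0:ℝ) < (2:ℝ)^m := Real.rpow_pos_of_pos two_pos _
    have : (0:ℝ) < (2:ℝ)^m / ((2:ℝ)^(m-p) - 1) := div_pos h4 (by linarith)
    have : (0:ℝ) < (1 - (2:ℝ)^(-p))⁻¹ := inv_pos.mpr (by linarith)
    linarith
  intro u hu t ht
  obtain ⟨hu0, hu1⟩ := hu
  have ht0 : (0:ℝ) < t := lt_of_lt_of_le one_pos ht
  set A : ℝ := u ^ (1/(2*β)) with hA_def
  have hA : 0 < A := Real.rpow_pos_of_pos hu0 _
  set B : ℝ := (u/t) ^ ((1:ℝ)/2) with hB_def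
  have hB : 0 < B := Real.rpow_pos_of_pos (div_pos hu0 ht0) _
  set Y : ℝ := B / A with hY_def
  have hY : 0 < Y := div_pos hB hA
  have hterm : ∀ ℓ : ℕ, (2:ℝ) ^ (-p * (ℓ:ℝ)) * min A (B * 2 ^ ((d:ℝ) * ℓ * (1-β))) =
      A * ((2:ℝ) ^ (-p * (ℓ:ℝ)) * min 1 (Y * 2 ^ (m * ℓ))) := by
    intro ℓ
    have h1 : (d:ℝ) * ℓ * (1-β) = m * ℓ := by rw [hm_def]; ring
    rw [h1]
    have h2 : A * min 1 (Y * 2 ^ (m * (ℓ:ℝ))) = min A (B * 2 ^ (m * (ℓ:ℝ))) := by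
      rw [mul_min_of_nonneg _ _ hA.le, mul_one]
      congr 1
      rw [hY_def]
      field_simp
    rw [← h2]; ring
  have hLfun : Lfun d p β t u = A * ∑' ℓ : ℕ, (2:ℝ) ^ (-p * (ℓ:ℝ)) * min 1 (Y * 2 ^ (m * ℓ)) := by
    rw [Lfun, ← tsum_mul_left]
    congr 1; funext ℓ; exact hterm ℓ
  -- Y^(p/m) identity
  have hYpm : Y ^ (p/m) = (u * t ^ (β / (1 - β))) ^ (-p / (2 * β * (d:ℝ))) := by
    have hY' : Y = u ^ ((1:ℝ)/2 - 1/(2*β)) * t ^ (-((1:ℝ)/2)) := by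
      rw [hY_def, hB_def, hA_def, Real.div_rpow hu0.le ht0.le,
        Real.rpow_sub hu0, Real.rpow_neg ht0.le]
      ring
    rw [hY', Real.mul_rpow (Real.rpow_pos_of_pos hu0 _).le (Real.rpow_pos_of_pos ht0 _).le,
      ← Real.rpow_mul hu0.le, ← Real.rpow_mul ht0.le,
      Real.mul_rpow hu0.le (Real.rpow_pos_of_pos ht0 _).le,
      ← Real.rpow_mul ht0.le]
    congr 1
    · congr 1
      rw [hm_def]
      field_simp
      ring
    · congr 1
      rw [hm_def]
      field_simp
  have hkey := key hp (show p < m from h) hY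
  rw [hLfun, ← hYpm]
  calc A * ∑' ℓ : ℕ, (2:ℝ) ^ (-p * (ℓ:ℝ)) * min 1 (Y * 2 ^ (m * ℓ))
      ≤ A * (((2:ℝ)^m / ((2:ℝ)^(m-p) - 1) + (1 - (2:ℝ)^(-p))⁻¹) * min 1 (Y ^ (p/m))) :=
        mul_le_mul_of_nonneg_left hkey hA.le
    _ = ((2:ℝ)^m / ((2:ℝ)^(m-p) - 1) + (1 - (2:ℝ)^(-p))⁻¹) * A * min 1 (Y ^ (p/m)) := by
        ring
end

section
/- Let p > 0, β ∈ (0, 1/2], d ≥ 1 with p = d(1-β), t > 0, and L_t(u) = Σ_{ℓ≥0} 2^{-pℓ} min( u^{1/(2β)}, (u/t)^{1/2} 2^{dℓ(1-β)} ). Then there is a constant C = C(p,β,d) > 0 such that for all u, t > 0: L_t(u) ≤ C · (u/t)^{1/2} · (1 + (log(u t^{β/(1-β)}))^+). -/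
theorem stmt4 (d : ℕ) (hd : 1 ≤ d) (p β : ℝ) (hp : 0 < p)
    (hβ : β ∈ Set.Ioc (0 : ℝ) (1 / 2)) (h : p = (d : ℝ) * (1 - β)) :
    ∃ C > (0 : ℝ), ∀ u > (0 : ℝ), ∀ t > (0 : ℝ),
      Lfun d p β t u ≤ C * (u / t) ^ ((1 : ℝ) / 2) *
        (1 + max (Real.log (u * t ^ (β / (1 - β)))) 0) := by
  obtain ⟨hβ0, hβ2⟩ := hβ
  have hβ1 : β < 1 := lt_of_le_of_lt hβ2 (by norm_num)
  have h1β : (0:ℝ) < 1 - β := by linarith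
  have hlog2 : (0:ℝ) < Real.log 2 := Real.log_pos (by norm_num)
  set r : ℝ := (2:ℝ) ^ (-p) with hr
  have hr0 : 0 < r := Real.rpow_pos_of_pos (by norm_num) _
  have hr1 : r < 1 := by
    rw [hr]
    exact Real.rpow_lt_one_of_one_lt_of_neg (by norm_num) (by linarith)
  have h1r : (0:ℝ) < 1 - r := by linarith
  set c : ℝ := (1 - β) / (2 * β * p * Real.log 2) with hc
  have hc0 : 0 < c := div_pos h1β (by positivity)
  set K : ℝ := (1 - r)⁻¹ with hK
  have hK0 : 0 < K := by positivity
  refine ⟨c + 1 + K, by positivity, ?_⟩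
  intro u hu t ht
  set M : ℝ := max (Real.log (u * t ^ (β / (1 - β)))) 0 with hMdef
  have hM0 : (0:ℝ) ≤ M := le_max_right _ _
  set A : ℝ := u ^ (1/(2*β)) with hA
  set B : ℝ := (u/t) ^ ((1:ℝ)/2) with hB
  have hA0 : 0 < A := Real.rpow_pos_of_pos hu _
  have hB0 : 0 < B := Real.rpow_pos_of_pos (div_pos hu ht) _
  set f : ℕ → ℝ := fun ℓ => (2:ℝ) ^ (-p * (ℓ:ℝ)) *
    min A (B * 2 ^ ((d : ℝ) * (ℓ:ℝ) * (1 - β))) with hf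
  have hLf : Lfun d p β t u = ∑' ℓ, f ℓ := by
    simp only [Lfun, hf, ← hA, ← hB]
  have hpl : ∀ ℓ : ℕ, (d : ℝ) * (ℓ:ℝ) * (1 - β) = p * ℓ := by
    intro ℓ; rw [h]; ring
  have hpow : ∀ ℓ : ℕ, (2:ℝ) ^ (-p * (ℓ:ℝ)) = r ^ ℓ := by
    intro ℓ
    rw [hr, Real.rpow_mul (by norm_num), Real.rpow_natCast]
  have hf0 : ∀ ℓ, 0 ≤ f ℓ := by
    intro ℓ
    exact mul_nonneg (Real.rpow_nonneg (by norm_num) _)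
      (le_min hA0.le (by positivity))
  have hf1 : ∀ ℓ, f ℓ ≤ B := by
    intro ℓ
    have h1 : f ℓ ≤ (2:ℝ) ^ (-p * (ℓ:ℝ)) * (B * 2 ^ ((d : ℝ) * (ℓ:ℝ) * (1 - β))) :=
      mul_le_mul_of_nonneg_left (min_le_right _ _) (Real.rpow_nonneg (by norm_num) _)
    have h2 : (2:ℝ) ^ (-p * (ℓ:ℝ)) * (2:ℝ) ^ (p * (ℓ:ℝ)) = 1 := by
      rw [← Real.rpow_add (by norm_num)]; norm_num
    rw [hpl ℓ] at h1
    calc f ℓ ≤ (2:ℝ) ^ (-p * (ℓ:ℝ)) * (B * 2 ^ (p * (ℓ:ℝ))) := h1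
      _ = ((2:ℝ) ^ (-p * (ℓ:ℝ)) * (2:ℝ) ^ (p * (ℓ:ℝ))) * B := by ring
      _ = B := by rw [h2, one_mul]
  have hf2 : ∀ ℓ, f ℓ ≤ A * r ^ ℓ := by
    intro ℓ
    calc f ℓ ≤ (2:ℝ) ^ (-p * (ℓ:ℝ)) * A :=
          mul_le_mul_of_nonneg_left (min_le_left _ _) (Real.rpow_nonneg (by norm_num) _)
      _ = A * r ^ ℓ := by rw [hpow ℓ]; ring
  have hsum : Summable f :=
    Summable.of_nonneg_of_le hf0 hf2 ((summable_geometric_of_lt_one hr0.le hr1).mul_left A)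
  set N : ℕ := ⌈c * M⌉₊ with hNdef
  have hNc : c * M ≤ (N:ℝ) := Nat.le_ceil _
  have hN1 : (N:ℝ) ≤ c * M + 1 := (Nat.ceil_lt_add_one (by positivity)).le
  -- key: A * 2^(-p*N) ≤ B
  have hAB : A * (2:ℝ) ^ (-p * (N:ℝ)) ≤ B := by
    set q : ℝ := (1 - β) / (2 * β) with hq
    have hq0 : 0 < q := div_pos h1β (by positivity)
    have hlogX : Real.log (u * t ^ (β / (1 - β))) =
        Real.log u + (β / (1 - β)) * Real.log t := by
      rw [Real.log_mul hu.ne' (Real.rpow_pos_of_pos ht _).ne', Real.log_rpow ht]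
    have hq2 : q * (β / (1 - β)) = 1/2 := by
      rw [hq]; field_simp
    have s1 : q * (Real.log u + (β / (1 - β)) * Real.log t) =
        q * Real.log u + (1/2) * Real.log t := by
      rw [mul_add, ← mul_assoc, hq2]
    have s2 : q * Real.log (u * t ^ (β / (1 - β))) ≤ q * M :=
      mul_le_mul_of_nonneg_left (le_max_left _ _) hq0.le
    have hcq : p * Real.log 2 * c = q := by
      rw [hc, hq]; field_simp
    have s3 : q * M ≤ p * Real.log 2 * (N:ℝ) := by
      calc q * M = p * Real.log 2 * (c * M) := by rw [← hcq]; ring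
        _ ≤ p * Real.log 2 * (N:ℝ) :=
          mul_le_mul_of_nonneg_left hNc (by positivity)
    have hkey : q * Real.log u + (1/2) * Real.log t ≤ p * Real.log 2 * (N:ℝ) := by
      have := s2.trans s3
      rw [hlogX, s1] at this
      exact this
    have hqLu : q * Real.log u = (1/(2*β)) * Real.log u - (1/2) * Real.log u := by
      rw [hq]; field_simp
    have hlog : Real.log (A * (2:ℝ) ^ (-p * (N:ℝ))) ≤ Real.log B := by
      rw [Real.log_mul hA0.ne' (Real.rpow_pos_of_pos (by norm_num) _).ne',
        hA, Real.log_rpow hu, Real.log_rpow (by norm_num : (0:ℝ) < 2),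
        hB, Real.log_rpow (div_pos hu ht), Real.log_div hu.ne' ht.ne']
      nlinarith [hkey, hqLu]
    have := Real.exp_le_exp.mpr hlog
    rwa [Real.exp_log (by positivity), Real.exp_log hB0] at this
  have hsplit := Summable.sum_add_tsum_nat_add N hsum
  have hhead : ∑ i ∈ Finset.range N, f i ≤ (N:ℝ) * B := by
    calc ∑ i ∈ Finset.range N, f i ≤ ∑ _i ∈ Finset.range N, B :=
          Finset.sum_le_sum (fun i _ => hf1 i)
      _ = (N:ℝ) * B := by simp [mul_comm]
  have htail : (∑' i, f (i + N)) ≤ K * B := by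
    have hle : ∀ i, f (i + N) ≤ (A * (2:ℝ) ^ (-p * (N:ℝ))) * r ^ i := by
      intro i
      calc f (i + N) ≤ A * r ^ (i + N) := hf2 (i + N)
        _ = (A * r ^ N) * r ^ i := by rw [pow_add]; ring
        _ = (A * (2:ℝ) ^ (-p * (N:ℝ))) * r ^ i := by rw [hpow N]
    calc (∑' i, f (i + N)) ≤ ∑' i, (A * (2:ℝ) ^ (-p * (N:ℝ))) * r ^ i :=
          Summable.tsum_le_tsum hle ((summable_nat_add_iff N).mpr hsum)
            ((summable_geometric_of_lt_one hr0.le hr1).mul_left _)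
      _ = (A * (2:ℝ) ^ (-p * (N:ℝ))) * (1 - r)⁻¹ := by
          rw [tsum_mul_left, tsum_geometric_of_lt_one hr0.le hr1]
      _ ≤ B * K := by
          rw [hK]
          exact mul_le_mul_of_nonneg_right hAB (by positivity)
      _ = K * B := mul_comm _ _
  have hmain : Lfun d p β t u ≤ ((N:ℝ) + K) * B := by
    rw [hLf, ← hsplit]
    calc (∑ i ∈ Finset.range N, f i) + ∑' i, f (i + N) ≤ (N:ℝ) * B + K * B :=
          add_le_add hhead htail
      _ = ((N:ℝ) + K) * B := by ring
  have hfin : ((N:ℝ) + K) * B ≤ (c + 1 + K) * B * (1 + M) := by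
    have e1 : ((N:ℝ) + K) * B ≤ (c * M + 1 + K) * B :=
      mul_le_mul_of_nonneg_right (by linarith) hB0.le
    have hnn : 0 ≤ (c + M + K * M) * B :=
      mul_nonneg (add_nonneg (add_nonneg hc0.le hM0) (mul_nonneg hK0.le hM0)) hB0.le
    have e2 : (c + 1 + K) * B * (1 + M) = (c * M + 1 + K) * B + (c + M + K * M) * B := by
      ring
    linarith
  exact hmain.trans hfin
end

section
/- Let (P_t) be a Markov semigroup such that for some θ_0 > 0 and constant c(θ_0) > 0, for every bounded Borel g : ℝ^d → ℝ the function P_{θ_0} g is Lipschitz with Lipschitz constant ≤ c(θ_0)‖g‖_sup; and suppose W_1(P_t(x,·), ν) ≤ ψ(x) e(t) for all t, x. Then for every Borel set A and every t ≥ θ_0, ‖P_t(x,·) − ν‖_{TV} ≤ c(θ_0) ψ(x) e(t − θ_0). -/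
open MeasureTheory Set
open scoped ENNReal

/-- The 1-Wasserstein distance, defined as the infimum over couplings of `∫ |x-y| dπ`
(with values in `ℝ≥0∞`). -/
noncomputable def Wasserstein1 {E : Type*} [MeasurableSpace E] [NormedAddCommGroup E]
    (μ ν : Measure E) : ℝ≥0∞ :=
  ⨅ (π : Measure (E × E)) (_ : π.map Prod.fst = μ ∧ π.map Prod.snd = ν),
    ∫⁻ z, (‖z.1 - z.2‖₊ : ℝ≥0∞) ∂π

theorem stmt14 {d : ℕ}
    (P : ℝ → EuclideanSpace ℝ (Fin d) → Measure (EuclideanSpace ℝ (Fin d)))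
    (hprob : ∀ t x, IsProbabilityMeasure (P t x))
    (hmeas : ∀ t, Measurable (P t))
    (hsemi : ∀ s t : ℝ, 0 ≤ s → 0 ≤ t → ∀ x, (P s x).bind (P t) = P (s + t) x)
    (ν : Measure (EuclideanSpace ℝ (Fin d))) [IsProbabilityMeasure ν]
    (hinv : ∀ t ≥ (0 : ℝ), ν.bind (P t) = ν)
    (θ0 c : ℝ) (hθ0 : 0 < θ0) (hc : 0 < c)
    -- Lipschitz strong Feller: for bounded Borel `g`, `P_{θ0} g` is `c‖g‖`-Lipschitz
    (hLSF : ∀ g : EuclideanSpace ℝ (Fin d) → ℝ, Measurable g → ∀ M : ℝ,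
      (∀ y, |g y| ≤ M) → ∀ x y,
        |(∫ z, g z ∂(P θ0 x)) - ∫ z, g z ∂(P θ0 y)| ≤ c * M * dist x y)
    (ψ : EuclideanSpace ℝ (Fin d) → ℝ) (hψ0 : ∀ x, 0 ≤ ψ x)
    (e : ℝ → ℝ) (he0 : ∀ t, 0 ≤ e t)
    -- `W_1(P_t(x,·), ν) ≤ ψ(x) e(t)`
    (hW1 : ∀ t ≥ (0 : ℝ), ∀ x, Wasserstein1 (P t x) ν ≤ ENNReal.ofReal (ψ x * e t)) :
    ∀ A : Set (EuclideanSpace ℝ (Fin d)), MeasurableSet A → ∀ t ≥ θ0, ∀ x,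
      |(P t x A).toReal - (ν A).toReal| ≤ c * ψ x * e (t - θ0) := by
  intro A hA t ht x
  have hθ0' : (0:ℝ) ≤ θ0 := hθ0.le
  have hs : (0:ℝ) ≤ t - θ0 := by linarith
  set s := t - θ0 with hsdef
  set f : EuclideanSpace ℝ (Fin d) → ℝ := fun z => ((P θ0 z) A).toReal with hfdef
  have hmA : Measurable fun z => (P θ0 z) A := Measure.measurable_measure.mp (hmeas θ0) A hA
  have hfmeas : Measurable f := hmA.ennreal_toReal
  have hfbd : ∀ z, |f z| ≤ 1 := by
    intro z
    have := hprob θ0 z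
    rw [abs_of_nonneg ENNReal.toReal_nonneg]
    calc ((P θ0 z) A).toReal ≤ (1 : ℝ≥0∞).toReal :=
          ENNReal.toReal_mono ENNReal.one_ne_top prob_le_one
      _ = 1 := by simp
  have hfLip : ∀ a b : EuclideanSpace ℝ (Fin d), |f a - f b| ≤ c * dist a b := by
    intro a b
    have h := hLSF (A.indicator fun _ => (1:ℝ)) (measurable_const.indicator hA) 1
      (fun y => by by_cases hy : y ∈ A <;> simp [Set.indicator, hy]) a b
    have key : ∀ z : EuclideanSpace ℝ (Fin d), (∫ w, A.indicator (fun _ => (1:ℝ)) w ∂(P θ0 z)) = f z := fun z =>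
      integral_indicator_one hA
    rw [key a, key b] at h
    simpa using h
  -- rewrite the two measures of A
  have hPt : (P t x) A = ∫⁻ z, (P θ0 z) A ∂(P s x) := by
    have h1 := hsemi s θ0 hs hθ0' x
    have h2 : s + θ0 = t := by rw [hsdef]; ring
    rw [← h2, ← h1, Measure.bind_apply hA (hmeas θ0).aemeasurable]
  have hν : ν A = ∫⁻ z, (P θ0 z) A ∂ν := by
    conv_lhs => rw [← hinv θ0 hθ0']
    rw [Measure.bind_apply hA (hmeas θ0).aemeasurable]
  have hconv : ∀ μ : Measure (EuclideanSpace ℝ (Fin d)), (∫⁻ z, (P θ0 z) A ∂μ).toReal = ∫ z, f z ∂μ := by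
    intro μ
    rw [← integral_toReal hmA.aemeasurable]
    filter_upwards with z
    exact lt_of_le_of_lt prob_le_one (by simp)
  rw [hPt, hν, hconv (P s x), hconv ν]
  -- epsilon argument via couplings
  refine le_of_forall_pos_le_add fun ε hε => ?_
  have hKne : ENNReal.ofReal (ψ x * e s) + ENNReal.ofReal (ε / c) ≠ ⊤ := by
    simp [ENNReal.ofReal_ne_top]
  have hlt : Wasserstein1 (P s x) ν
      < ENNReal.ofReal (ψ x * e s) + ENNReal.ofReal (ε / c) :=
    lt_of_le_of_lt (hW1 s hs x)
      (ENNReal.lt_add_right ENNReal.ofReal_ne_top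
        (ne_of_gt (ENNReal.ofReal_pos.mpr (div_pos hε hc))))
  rw [Wasserstein1, iInf_lt_iff] at hlt
  obtain ⟨π, hπlt⟩ := hlt
  rw [iInf_lt_iff] at hπlt
  obtain ⟨⟨hπ1, hπ2⟩, hcost⟩ := hπlt
  have hcostfin : (∫⁻ z : (EuclideanSpace ℝ (Fin d)) × (EuclideanSpace ℝ (Fin d)), (‖z.1 - z.2‖₊ : ℝ≥0∞) ∂π) < ⊤ :=
    lt_trans hcost (lt_top_iff_ne_top.mpr hKne)
  have hπprob : IsProbabilityMeasure π := by
    constructor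
    have h1 : π.map Prod.fst Set.univ = 1 := by rw [hπ1]; exact (hprob s x).measure_univ
    rwa [Measure.map_apply measurable_fst MeasurableSet.univ, Set.preimage_univ] at h1
  -- express integrals via the coupling
  have hmap1 : ∫ z, f z ∂(P s x) = ∫ z : (EuclideanSpace ℝ (Fin d)) × (EuclideanSpace ℝ (Fin d)), f z.1 ∂π := by
    rw [← hπ1, integral_map measurable_fst.aemeasurable
      (hfmeas.aestronglyMeasurable)]
  have hmap2 : ∫ z, f z ∂ν = ∫ z : (EuclideanSpace ℝ (Fin d)) × (EuclideanSpace ℝ (Fin d)), f z.2 ∂π := by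
    rw [← hπ2, integral_map measurable_snd.aemeasurable
      (hfmeas.aestronglyMeasurable)]
  -- integrability facts
  have hint1 : Integrable (fun z : (EuclideanSpace ℝ (Fin d)) × (EuclideanSpace ℝ (Fin d)) => f z.1) π := by
    refine Integrable.mono' (integrable_const (1:ℝ))
      (hfmeas.comp measurable_fst).aestronglyMeasurable ?_
    filter_upwards with z using hfbd z.1
  have hint2 : Integrable (fun z : (EuclideanSpace ℝ (Fin d)) × (EuclideanSpace ℝ (Fin d)) => f z.2) π := by
    refine Integrable.mono' (integrable_const (1:ℝ))
      (hfmeas.comp measurable_snd).aestronglyMeasurable ?_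
    filter_upwards with z using hfbd z.2
  have hgmeas : Measurable fun z : (EuclideanSpace ℝ (Fin d)) × (EuclideanSpace ℝ (Fin d)) => ‖z.1 - z.2‖ :=
    (measurable_fst.sub measurable_snd).norm
  have hgint : Integrable (fun z : (EuclideanSpace ℝ (Fin d)) × (EuclideanSpace ℝ (Fin d)) => c * ‖z.1 - z.2‖) π := by
    refine Integrable.const_mul ⟨hgmeas.aestronglyMeasurable, ?_⟩ c
    simpa [HasFiniteIntegral, Real.nnnorm_of_nonneg (norm_nonneg _)] using
      (show (∫⁻ z, ‖z.1 - z.2‖ₑ ∂π) < ⊤ by simpa only [enorm_eq_nnnorm] using hcostfin)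
  have hkey : |∫ z, f z ∂(P s x) - ∫ z, f z ∂ν|
      ≤ c * (∫⁻ z : (EuclideanSpace ℝ (Fin d)) × (EuclideanSpace ℝ (Fin d)), (‖z.1 - z.2‖₊ : ℝ≥0∞) ∂π).toReal := by
    rw [hmap1, hmap2, ← integral_sub hint1 hint2]
    calc |∫ z : (EuclideanSpace ℝ (Fin d)) × (EuclideanSpace ℝ (Fin d)), (f z.1 - f z.2) ∂π|
        ≤ ∫ z : (EuclideanSpace ℝ (Fin d)) × (EuclideanSpace ℝ (Fin d)), |f z.1 - f z.2| ∂π := by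
          simpa using norm_integral_le_integral_norm (fun z : (EuclideanSpace ℝ (Fin d)) × (EuclideanSpace ℝ (Fin d)) => f z.1 - f z.2) (μ := π)
      _ ≤ ∫ z : (EuclideanSpace ℝ (Fin d)) × (EuclideanSpace ℝ (Fin d)), c * ‖z.1 - z.2‖ ∂π := by
          refine integral_mono (hint1.sub hint2).abs hgint fun z => ?_
          simpa [dist_eq_norm] using hfLip z.1 z.2
      _ = c * ∫ z : (EuclideanSpace ℝ (Fin d)) × (EuclideanSpace ℝ (Fin d)), ‖z.1 - z.2‖ ∂π := by rw [integral_const_mul]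
      _ = c * (∫⁻ z : (EuclideanSpace ℝ (Fin d)) × (EuclideanSpace ℝ (Fin d)), (‖z.1 - z.2‖₊ : ℝ≥0∞) ∂π).toReal := by
          rw [integral_eq_lintegral_of_nonneg_ae (Filter.Eventually.of_forall fun z => norm_nonneg _)
            hgmeas.aestronglyMeasurable]
          simp_rw [ofReal_norm_eq_enorm, enorm_eq_nnnorm]
  refine hkey.trans ?_
  have hcr : (∫⁻ z : (EuclideanSpace ℝ (Fin d)) × (EuclideanSpace ℝ (Fin d)), (‖z.1 - z.2‖₊ : ℝ≥0∞) ∂π).toReal ≤ ψ x * e s + ε / c := by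
    have := ENNReal.toReal_mono hKne hcost.le
    rwa [ENNReal.toReal_add ENNReal.ofReal_ne_top ENNReal.ofReal_ne_top,
      ENNReal.toReal_ofReal (mul_nonneg (hψ0 x) (he0 s)),
      ENNReal.toReal_ofReal (div_nonneg hε.le hc.le)] at this
  calc c * (∫⁻ z : (EuclideanSpace ℝ (Fin d)) × (EuclideanSpace ℝ (Fin d)), (‖z.1 - z.2‖₊ : ℝ≥0∞) ∂π).toReal
      ≤ c * (ψ x * e s + ε / c) := by
        exact mul_le_mul_of_nonneg_left hcr hc.le
    _ = c * ψ x * e s + ε := by field_simp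
end
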